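/- The generalized Jacobi–Trudi formula holds: $^n s_\lambda(x_1,\dots,x_n|y) = \det\left[h_{\lambda_i+j-i}(x_1,\dots,x_n|\tau^{j-1}y)\right]_{i,j=1}^n$, where $h_p(x_1,\dots,x_n|y)=\sum_{1\le i_1\le\dots\le i_p\le n}(x_{i_1}-y_{i_1})(x_{i_2}-y_{i_2+1})\cdots(x_{i_p}-y_{i_p+p-1})$ for $p\ge 1$, $h_0=1$, and $h_p=0$ for $p<0$. -/

import Mathlib

open Finset

/-- Generalized factorial power `(x|y)^p = ∏_{j=1}^p (x - y_j)`
for a doubly infinite sequence `y`. -/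
def gfp {R : Type*} [CommRing R] (y : ℤ → R) (x : R) (p : ℕ) : R :=
  ∏ j ∈ Finset.range p, (x - y ((j : ℤ) + 1))

/-- Numerator determinant `det [(x_i|y)^{λ_j + n - j}]` (indices `i j : Fin n`, zero-based,
so the 1-based exponent `λ_j + n - j` becomes `λ_j + n - (j+1)`). -/
def dnum {R : Type*} [CommRing R] (n : ℕ) (x : Fin n → R) (y : ℤ → R) (l : Fin n → ℕ) : R :=
  Matrix.det (Matrix.of fun i j : Fin n => gfp y (x i) (l j + n - ((j : ℕ) + 1)))

/-- Denominator determinant `det [(x_i|y)^{n-j}]`. -/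
def dden {R : Type*} [CommRing R] (n : ℕ) (x : Fin n → R) (y : ℤ → R) : R :=
  dnum n x y fun _ => 0

/-- The double complete homogeneous function
`h_p(x_1,…,x_m|y) = ∑_{1 ≤ i_1 ≤ … ≤ i_p ≤ m} ∏_{j=1}^p (x_{i_j} - y_{i_j + j - 1})`
(zero-based indexing of the variables and of `j`). -/
def dh {R : Type*} [CommRing R] (m p : ℕ) (x : Fin m → R) (y : ℤ → R) : R :=
  ∑ f ∈ Finset.univ.filter (fun f : Fin p → Fin m => ∀ a b : Fin p, a ≤ b → f a ≤ f b),
    ∏ j : Fin p, (x (f j) - y (((f j : ℕ) : ℤ) + ((j : ℕ) : ℤ) + 1))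

/-- `h_p` extended to integer `p`, with `h_p = 0` for `p < 0`. -/
def dhZ {R : Type*} [CommRing R] (m : ℕ) (p : ℤ) (x : Fin m → R) (y : ℤ → R) : R :=
  if 0 ≤ p then dh m p.toNat x y else 0

open Finset Polynomial Matrix

section basic
variable {R : Type*} [CommRing R]

lemma gfp_succ (y : ℤ → R) (x : R) (p : ℕ) :
    gfp y x (p+1) = gfp y x p * (x - y ((p:ℤ)+1)) := by
  simp [gfp, Finset.prod_range_succ]

lemma dh_zero (m : ℕ) (x : Fin m → R) (y : ℤ → R) : dh m 0 x y = 1 := by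
  simp [dh]

lemma dh_mzero (p : ℕ) (x : Fin 0 → R) (y : ℤ → R) : dh 0 (p+1) x y = 0 := by
  simp [dh]

lemma dh_rec (m p : ℕ) (x : Fin (m+1) → R) (y : ℤ → R) :
    dh (m+1) (p+1) x y =
      dh (m+1) p x y * (x (Fin.last m) - y ((m:ℤ) + (p:ℤ) + 1))
      + dh m (p+1) (x ∘ Fin.castSucc) y := by
  classical
  rw [dh]
  rw [← Finset.sum_filter_add_sum_filter_not _ (fun f : Fin (p+1) → Fin (m+1) => f (Fin.last p) = Fin.last m)]
  congr 1
  · -- case A : f (last p) = last m  ≃  Mono (m+1) p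
    rw [dh, Finset.sum_mul]
    refine Finset.sum_nbij' (fun f => fun j : Fin p => f j.castSucc)
      (fun g => Fin.snoc g (Fin.last m)) ?_ ?_ ?_ ?_ ?_
    · intro f hf
      simp only [Finset.mem_filter, Finset.mem_univ, true_and] at hf ⊢
      exact fun a b hab => hf.1 _ _ (by simpa [Fin.castSucc_le_castSucc_iff] using hab)
    · intro g hg
      simp only [Finset.mem_filter, Finset.mem_univ, true_and] at hg ⊢
      constructor
      · intro a b hab
        rcases Fin.eq_castSucc_or_eq_last b with ⟨b', rfl⟩ | rfl
        · rcases Fin.eq_castSucc_or_eq_last a with ⟨a', rfl⟩ | rfl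
          · simpa [Fin.snoc_castSucc] using hg _ _ (by simpa [Fin.castSucc_le_castSucc_iff] using hab)
          · exact absurd hab (Fin.not_le.mpr (Fin.castSucc_lt_last b'))
        · simp [Fin.snoc_last, Fin.le_last]
      · simp [Fin.snoc_last]
    · intro f hf
      simp only [Finset.mem_filter, Finset.mem_univ, true_and] at hf
      funext j
      rcases Fin.eq_castSucc_or_eq_last j with ⟨j', rfl⟩ | rfl
      · simp [Fin.snoc_castSucc]
      · simp [Fin.snoc_last, hf.2]
    · intro g hg
      funext j
      simp [Fin.snoc_castSucc]
    · intro f hf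
      simp only [Finset.mem_filter, Finset.mem_univ, true_and] at hf
      rw [Fin.prod_univ_castSucc, hf.2]
      simp [Fin.val_last]
  · -- case B : f (last p) ≠ last m  ≃  Mono m (p+1)
    cases m with
    | zero =>
      rw [dh]
      have h1 : (Finset.univ.filter (fun f : Fin (p+1) → Fin 1 => (∀ a b : Fin (p+1), a ≤ b → f a ≤ f b) ∧ ¬ f (Fin.last p) = Fin.last 0)) = ∅ := by
        apply Finset.filter_eq_empty_iff.mpr
        intro f _
        simp [Subsingleton.elim (f (Fin.last p)) (Fin.last 0)]
      rw [Finset.filter_filter] at *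
      rw [h1]
      simp [Finset.univ_eq_empty]
    | succ m' =>
      rw [dh]
      have key : ∀ f : Fin (p+1) → Fin (m'+1+1), (∀ a b, a ≤ b → f a ≤ f b) →
          ¬ f (Fin.last p) = Fin.last (m'+1) → ∀ j, (f j : ℕ) ≤ m' := by
        intro f hf hl j
        have h1 : f j ≤ f (Fin.last p) := hf j (Fin.last p) (Fin.le_last j)
        have h2 : f (Fin.last p) < Fin.last (m'+1) := lt_of_le_of_ne (Fin.le_last _) hl
        have := lt_of_le_of_lt h1 h2
        simpa [Fin.lt_iff_val_lt_val, Fin.val_last, Nat.lt_succ_iff] using this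
      refine Finset.sum_nbij' (fun f => fun j : Fin (p+1) => (⟨min (f j : ℕ) m', by omega⟩ : Fin (m'+1)))
        (fun g => fun j => (g j).castSucc) ?_ ?_ ?_ ?_ ?_
      · intro f hf
        simp only [Finset.mem_filter, Finset.mem_univ, true_and] at hf ⊢
        intro a b hab
        have := hf.1 a b hab
        simp only [Fin.le_iff_val_le_val] at this ⊢
        omega
      · intro g hg
        simp only [Finset.mem_filter, Finset.mem_univ, true_and] at hg ⊢
        constructor
        · intro a b hab
          simpa [Fin.castSucc_le_castSucc_iff] using hg a b hab
        · intro hc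
          have := congrArg Fin.val hc
          simp [Fin.val_last] at this
          omega
      · intro f hf
        simp only [Finset.mem_filter, Finset.mem_univ, true_and] at hf
        funext j
        have := key f hf.1 hf.2 j
        apply Fin.ext
        simp [Fin.coe_castSucc, min_eq_left this]
      · intro g hg
        funext j
        apply Fin.ext
        have : (g j : ℕ) ≤ m' := by omega
        simp [Fin.coe_castSucc, min_eq_left this]
      · intro f hf
        simp only [Finset.mem_filter, Finset.mem_univ, true_and] at hf
        apply Finset.prod_congr rfl
        intro j _
        have := key f hf.1 hf.2 j
        simp [Function.comp, min_eq_left this]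

end basic

section field
variable {K : Type*} [Field K]

lemma leadingCoeff_lagrange_basis {n : ℕ} (x : Fin n → K) (hx : Function.Injective x) (i : Fin n) :
    (Lagrange.basis Finset.univ x i).leadingCoeff
      = (∏ l ∈ Finset.univ.erase i, (x i - x l))⁻¹ := by
  rw [Lagrange.basis, Polynomial.leadingCoeff_prod, ← Finset.prod_inv_distrib]
  apply Finset.prod_congr rfl
  intro j hj
  have hij : x i ≠ x j := fun hc => (Finset.mem_erase.mp hj).1 (hx hc).symm
  rw [Lagrange.basisDivisor]
  rw [leadingCoeff_mul, leadingCoeff_C, (monic_X_sub_C (x j)).leadingCoeff, mul_one]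

lemma lagrange_top {n : ℕ} (x : Fin n → K) (hx : Function.Injective x)
    (P : Polynomial K) (hP : P.degree < n) :
    ∑ i : Fin n, P.eval (x i) / ∏ l ∈ Finset.univ.erase i, (x i - x l) = P.coeff (n-1) := by
  have hinj : Set.InjOn x (Finset.univ : Finset (Fin n)) := fun a _ b _ h => hx h
  have hdeg : P.degree < (Finset.univ : Finset (Fin n)).card := by simpa using hP
  conv_rhs => rw [Lagrange.eq_interpolate hinj hdeg]
  rw [Lagrange.interpolate_apply, Polynomial.finset_sum_coeff]
  apply Finset.sum_congr rfl
  intro i _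
  rw [Polynomial.coeff_C_mul]
  have hb : (Lagrange.basis Finset.univ x i).natDegree = n - 1 := by
    rw [Lagrange.natDegree_basis hinj (Finset.mem_univ i)]; simp
  rw [← hb, Polynomial.coeff_natDegree, leadingCoeff_lagrange_basis x hx i, div_eq_mul_inv]

/-- polynomial version of gfp -/
noncomputable def gfpP (y : ℤ → K) (p : ℕ) : Polynomial K :=
  ∏ j ∈ Finset.range p, (X - C (y ((j : ℤ) + 1)))

lemma gfpP_monic (y : ℤ → K) (p : ℕ) : (gfpP y p).Monic :=
  monic_prod_of_monic _ _ (fun j _ => monic_X_sub_C _)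

lemma gfpP_natDegree (y : ℤ → K) (p : ℕ) : (gfpP y p).natDegree = p := by
  rw [gfpP, natDegree_prod _ _ (fun j _ => X_sub_C_ne_zero _)]
  simp

lemma gfpP_eval (y : ℤ → K) (p : ℕ) (t : K) : (gfpP y p).eval t = gfp y t p := by
  simp [gfpP, gfp, eval_prod]

lemma erase_prod_castSucc (x : ℕ → K) (m' : ℕ) (i : Fin m') :
    ∏ l ∈ (Finset.univ : Finset (Fin (m'+1))).erase i.castSucc, (x (i:ℕ) - x (l:ℕ))
    = (∏ l ∈ (Finset.univ : Finset (Fin m')).erase i, (x (i:ℕ) - x (l:ℕ))) * (x (i:ℕ) - x m') := by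
  rw [Fin.univ_castSuccEmb, Finset.cons_eq_insert, Finset.map_eq_image]
  simp only [show (⇑(Fin.castSuccEmb : Fin m' ↪ Fin (m'+1))) = Fin.castSucc from rfl]
  rw [Finset.erase_insert_of_ne (by
    intro hc
    exact absurd (hc ▸ rfl : i.castSucc = Fin.last m') (Fin.castSucc_lt_last i).ne)]
  rw [Finset.prod_insert (by
    simp only [Finset.mem_erase, Finset.mem_image, Finset.mem_univ, true_and]
    rintro ⟨-, l, hl⟩
    exact absurd hl (Fin.castSucc_lt_last l).ne)]
  rw [← Finset.image_erase (f := Fin.castSucc) (fun a b h => Fin.castSucc_injective _ h) Finset.univ i]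
  rw [Finset.prod_image (fun a _ b _ h => Fin.castSucc_injective _ h)]
  rw [mul_comm]
  simp [Fin.val_last]

lemma dh_lagrange (y : ℤ → K) (x : ℕ → K) (p : ℕ) :
    ∀ m : ℕ, 1 ≤ m + p → (∀ i j : ℕ, i < m → j < m → i ≠ j → x i ≠ x j) →
    dh m p (fun i : Fin m => x (i:ℕ)) y
      = ∑ i : Fin m, gfp y (x (i:ℕ)) (p + m - 1) / ∏ l ∈ Finset.univ.erase i, (x (i:ℕ) - x (l:ℕ)) := by
  induction p with
  | zero =>
    intro m hm hinj
    rw [dh_zero]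
    have hxinj : Function.Injective (fun i : Fin m => x (i:ℕ)) := by
      intro a b hab
      by_contra hne
      exact hinj a b a.isLt b.isLt (fun h => hne (Fin.ext h)) hab
    have := lagrange_top (fun i : Fin m => x (i:ℕ)) hxinj (gfpP y (m-1)) (by
      rw [Polynomial.degree_eq_natDegree (gfpP_monic y (m-1)).ne_zero, gfpP_natDegree]
      exact_mod_cast Nat.sub_lt (by omega) one_pos)
    simp only [gfpP_eval] at this
    rw [show (0 + m - 1) = m - 1 by omega, this]
    have hco : (gfpP y (m-1)).coeff (m-1) = 1 := by
      have h2 := (gfpP_monic y (m-1)).coeff_natDegree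
      rwa [gfpP_natDegree] at h2
    exact hco.symm
  | succ p ih =>
    intro m
    induction m with
    | zero => intro _ _; rw [dh_mzero]; simp
    | succ m' ihm =>
      intro _ hinj
      have hinj' : ∀ i j : ℕ, i < m' → j < m' → i ≠ j → x i ≠ x j :=
        fun i j hi hj => hinj i j (by omega) (by omega)
      have hrec := dh_rec m' p (fun i : Fin (m'+1) => x (i:ℕ)) y
      have hcomp : ((fun i : Fin (m'+1) => x (i:ℕ)) ∘ Fin.castSucc) = fun i : Fin m' => x (i:ℕ) := by
        funext i; simp [Function.comp]
      rw [hcomp] at hrec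
      rw [hrec, ih (m'+1) (by omega) hinj, ihm (by omega) hinj']
      rw [show p + (m'+1) - 1 = p + m' by omega, show (p+1) + m' - 1 = p + m' by omega,
        show (p+1) + (m'+1) - 1 = p + m' + 1 by omega]
      rw [Fin.sum_univ_castSucc, Fin.sum_univ_castSucc (n := m')]
      simp only [Fin.val_last, Fin.coe_castSucc]
      have hy : ((m':ℤ) + (p:ℤ) + 1) = (((p + m' : ℕ)) : ℤ) + 1 := by push_cast; ring
      rw [hy]
      set q := p + m' with hq
      set c := x m' - y ((q:ℤ)+1) with hc
      have keyl : gfp y (x m') q / (∏ l ∈ Finset.univ.erase (Fin.last m'), (x m' - x (l:ℕ))) * c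
          = gfp y (x m') (q+1) / (∏ l ∈ Finset.univ.erase (Fin.last m'), (x m' - x (l:ℕ))) := by
        rw [gfp_succ]
        ring
      have key : ∀ i : Fin m',
          gfp y (x (i:ℕ)) q / (∏ l ∈ Finset.univ.erase i.castSucc, (x (i:ℕ) - x (l:ℕ))) * c
          + gfp y (x (i:ℕ)) q / (∏ l ∈ Finset.univ.erase i, (x (i:ℕ) - x (l:ℕ)))
          = gfp y (x (i:ℕ)) (q+1) / (∏ l ∈ Finset.univ.erase i.castSucc, (x (i:ℕ) - x (l:ℕ))) := by
        intro i
        rw [erase_prod_castSucc x m' i, gfp_succ]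
        have hD' : (∏ l ∈ Finset.univ.erase i, (x (i:ℕ) - x (l:ℕ))) ≠ 0 := by
          rw [Finset.prod_ne_zero_iff]
          intro l hl
          exact sub_ne_zero_of_ne (hinj' _ _ i.isLt l.isLt
            (fun h => (Finset.mem_erase.mp hl).1 (Fin.ext h).symm))
        have hd : x (i:ℕ) - x m' ≠ 0 :=
          sub_ne_zero_of_ne (hinj _ _ (by omega) (by omega) (by omega))
        field_simp
        ring
      rw [add_mul, Finset.sum_mul, keyl, add_right_comm, ← Finset.sum_add_distrib]
      congr 1
      exact Finset.sum_congr rfl fun i _ => key i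

/-- the shift polynomial c_j -/
noncomputable def cP {K : Type*} [Field K] (y : ℤ → K) (j : ℕ) : Polynomial K :=
  ∏ s ∈ Finset.range j, (X - C (y ((s : ℤ) + 1 - j)))

lemma cP_monic (y : ℤ → K) (j : ℕ) : (cP y j).Monic :=
  monic_prod_of_monic _ _ (fun s _ => monic_X_sub_C _)

lemma cP_natDegree (y : ℤ → K) (j : ℕ) : (cP y j).natDegree = j := by
  rw [cP, natDegree_prod _ _ (fun s _ => X_sub_C_ne_zero _)]
  simp

lemma prod_Ioi_rev {n : ℕ} (f : Fin n → Fin n → K) :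
    (∏ i : Fin n, ∏ j ∈ Finset.Ioi i, f j.rev i.rev) = ∏ i : Fin n, ∏ j ∈ Finset.Ioi i, f i j := by
  rw [Finset.prod_sigma', Finset.prod_sigma']
  refine Finset.prod_nbij' (fun p => ⟨p.2.rev, p.1.rev⟩) (fun p => ⟨p.2.rev, p.1.rev⟩)
    ?_ ?_ ?_ ?_ ?_ <;> simp [Fin.rev_lt_rev]

/-- the denominator determinant -/
lemma dden_eq (n : ℕ) (x : Fin n → K) (y : ℤ → K) :
    dden n x y = ∏ i : Fin n, ∏ j ∈ Finset.Ioi i, (x i - x j) := by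
  rw [dden, dnum]
  rw [← Matrix.det_submatrix_equiv_self (Fin.revPerm) (Matrix.of fun i j : Fin n => gfp y (x i) (0 + n - ((j:ℕ)+1)))]
  have hentry : ∀ i j : Fin n, (Matrix.of fun i j : Fin n => gfp y (x i) (0 + n - ((j:ℕ)+1))).submatrix Fin.revPerm Fin.revPerm i j
      = (gfpP y (j:ℕ)).eval (x i.rev) := by
    intro i j
    simp only [Matrix.submatrix_apply, Matrix.of_apply, Fin.revPerm_apply, gfpP_eval]
    congr 1
    rw [Fin.val_rev]
    omega
  rw [show ((Matrix.of fun i j : Fin n => gfp y (x i) (0 + n - ((j:ℕ)+1))).submatrix Fin.revPerm Fin.revPerm)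
      = Matrix.of (fun i j : Fin n => (gfpP y (j:ℕ)).eval ((fun k : Fin n => x k.rev) i)) from by
    ext i j; exact hentry i j]
  rw [← Matrix.det_eval_matrixOfPolynomials_eq_det_vandermonde (fun k : Fin n => x k.rev)
      (fun j => gfpP y (j:ℕ)) (fun j => gfpP_natDegree y _) (fun j => gfpP_monic y _)]
  rw [Matrix.det_vandermonde]
  exact prod_Ioi_rev (fun a b => x a - x b)

lemma detC_eq (n : ℕ) (x : Fin n → K) (y : ℤ → K) :
    Matrix.det (Matrix.of fun k j : Fin n => (cP y (j:ℕ)).eval (x k))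
      = ∏ i : Fin n, ∏ j ∈ Finset.Ioi i, (x j - x i) := by
  rw [← Matrix.det_eval_matrixOfPolynomials_eq_det_vandermonde x
      (fun j => cP y (j:ℕ)) (fun j => cP_natDegree y _) (fun j => cP_monic y _)]
  rw [Matrix.det_vandermonde]

lemma gfp_shift (y : ℤ → K) (t : K) (j q : ℕ) (h : j ≤ q) :
    gfp (fun k => y (k - j)) t q = (cP y j).eval t * gfp y t (q - j) := by
  rw [gfp]
  conv_lhs => rw [show q = j + (q - j) by omega, Finset.prod_range_add]
  congr 1
  · rw [cP, eval_prod]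
    apply Finset.prod_congr rfl
    intro s _
    simp only [eval_sub, eval_X, eval_C]
  · rw [gfp]
    apply Finset.prod_congr rfl
    intro s _
    have harg : ((j + s : ℕ) : ℤ) + 1 - (j:ℕ) = (s:ℤ) + 1 := by push_cast; ring
    rw [harg]

lemma entryH (n : ℕ) (hn : 0 < n) (x : Fin n → K) (hx : Function.Injective x) (y : ℤ → K)
    (p : ℤ) (e : ℕ) (j : Fin n) (hrel : p + (n:ℤ) - 1 = (e:ℤ) + ((j:ℕ):ℤ)) :
    dhZ n p x (fun k => y (k - (j:ℕ))) =
      ∑ k : Fin n, (cP y (j:ℕ)).eval (x k) * gfp y (x k) e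
        / ∏ l ∈ Finset.univ.erase k, (x k - x l) := by
  classical
  obtain ⟨i0, hi0⟩ : ∃ i0 : Fin n, True := ⟨⟨0, hn⟩, trivial⟩
  set xe : ℕ → K := fun i => if h : i < n then x ⟨i, h⟩ else x i0 with hxe
  have hxev : ∀ i : Fin n, xe (i:ℕ) = x i := fun i => by
    simp only [hxe, dif_pos i.isLt]
  have hfun : (fun i : Fin n => xe (i:ℕ)) = x := funext hxev
  have hinj : ∀ a b : ℕ, a < n → b < n → a ≠ b → xe a ≠ xe b := by
    intro a b ha hb hab
    simp only [hxe, dif_pos ha, dif_pos hb]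
    exact fun hc => hab (congrArg Fin.val (hx hc))
  rw [dhZ]
  by_cases hp : 0 ≤ p
  · rw [if_pos hp]
    have := dh_lagrange (fun k => y (k - (j:ℕ))) xe p.toNat n (by omega) hinj
    simp only [hxev] at this
    rw [this]
    apply Finset.sum_congr rfl
    intro k _
    have hq : p.toNat + n - 1 = e + (j:ℕ) := by omega
    rw [hq, gfp_shift y (x k) (j:ℕ) (e + (j:ℕ)) (by omega)]
    rw [show e + (j:ℕ) - (j:ℕ) = e by omega, mul_comm ((cP y (j:ℕ)).eval (x k)) _]
  · rw [if_neg hp]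
    have hej : e + (j:ℕ) < n - 1 := by omega
    have := lagrange_top x hx (cP y (j:ℕ) * gfpP y e) (by
      have h1 : (cP y (j:ℕ) * gfpP y e).natDegree = (j:ℕ) + e := by
        rw [natDegree_mul (cP_monic y _).ne_zero (gfpP_monic y _).ne_zero,
          cP_natDegree, gfpP_natDegree]
      rw [degree_eq_natDegree (mul_ne_zero (cP_monic y _).ne_zero (gfpP_monic y _).ne_zero), h1]
      exact_mod_cast (by omega : (j:ℕ) + e < n))
    rw [Polynomial.coeff_eq_zero_of_natDegree_lt (by
      rw [natDegree_mul (cP_monic y _).ne_zero (gfpP_monic y _).ne_zero,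
        cP_natDegree, gfpP_natDegree]
      omega)] at this
    rw [← this]
    apply Finset.sum_congr rfl
    intro k _
    rw [eval_mul, gfpP_eval]

theorem jt_field (n : ℕ) (hn : 0 < n) (x : Fin n → K) (hx : Function.Injective x) (y : ℤ → K)
    (l : Fin n → ℕ) :
    dnum n x y l =
      Matrix.det (Matrix.of fun i j : Fin n =>
          dhZ n ((l i : ℤ) + ((j:ℕ):ℤ) - ((i:ℕ):ℤ)) x (fun k => y (k - ((j:ℕ):ℤ)))) *
        dden n x y := by
  set D : Fin n → K := fun k => ∏ m ∈ Finset.univ.erase k, (x k - x m) with hD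
  have hDne : ∀ k, D k ≠ 0 := by
    intro k
    rw [hD, Finset.prod_ne_zero_iff]
    intro m hm
    exact sub_ne_zero_of_ne (fun hc => (Finset.mem_erase.mp hm).1 (hx hc).symm)
  set M : Matrix (Fin n) (Fin n) K := Matrix.of fun i k => gfp y (x k) (l i + n - ((i:ℕ)+1)) with hM
  set B : Matrix (Fin n) (Fin n) K :=
    Matrix.of fun k j => (D k)⁻¹ * (cP y (j:ℕ)).eval (x k) with hB
  have hHMB : (Matrix.of fun i j : Fin n =>
      dhZ n ((l i : ℤ) + ((j:ℕ):ℤ) - ((i:ℕ):ℤ)) x (fun k => y (k - ((j:ℕ):ℤ)))) = M * B := by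
    ext i j
    rw [Matrix.mul_apply, Matrix.of_apply]
    have hi : (i:ℕ) < n := i.isLt
    rw [entryH n hn x hx y _ (l i + n - ((i:ℕ)+1)) j (by omega)]
    apply Finset.sum_congr rfl
    intro k _
    simp only [hM, hB, Matrix.of_apply]
    field_simp
    ring
  have hdnum : dnum n x y l = Matrix.det M := by
    rw [dnum, ← Matrix.det_transpose M]
    congr 1
  have hdetB : Matrix.det B = (∏ k, (D k)⁻¹) *
      (∏ i : Fin n, ∏ j ∈ Finset.Ioi i, (x j - x i)) := by
    rw [hB]; refine (Matrix.det_mul_column (fun k => (D k)⁻¹) (Matrix.of fun k j : Fin n => (cP y (j:ℕ)).eval (x k))).trans ?_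
    congr 1
    exact detC_eq n x y
  have hprodD : (∏ i : Fin n, ∏ j ∈ Finset.Ioi i, (x i - x j)) *
      (∏ i : Fin n, ∏ j ∈ Finset.Ioi i, (x j - x i)) = ∏ k, D k := by
    simp only [hD]
    have h0 := Finset.prod_prod_Ioi_mul_eq_prod_prod_off_diag (fun a b : Fin n => x b - x a)
    simp only [Finset.compl_singleton] at h0
    rw [← Finset.prod_mul_distrib]
    rw [Finset.prod_congr rfl (fun i _ => (Finset.prod_mul_distrib
      (s := Finset.Ioi i) (f := fun j => x i - x j) (g := fun j => x j - x i)).symm)]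
    convert h0 using 4
  rw [hHMB, Matrix.det_mul, hdetB, hdnum, dden_eq]
  have h1 : (∏ k, (D k)⁻¹) = (∏ k, D k)⁻¹ := by
    rw [Finset.prod_inv_distrib]
  rw [h1]
  have h2 : (∏ k, D k) ≠ 0 := Finset.prod_ne_zero_iff.mpr (fun k _ => hDne k)
  field_simp
  calc Matrix.det M * ∏ k, D k
      = Matrix.det M * ((∏ i : Fin n, ∏ j ∈ Finset.Ioi i, (x i - x j)) *
        (∏ i : Fin n, ∏ j ∈ Finset.Ioi i, (x j - x i))) := by rw [hprodD]
    _ = _ := by ring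

end field

section maps
variable {R S : Type*} [CommRing R] [CommRing S] (φ : R →+* S)

lemma map_gfp (y : ℤ → R) (t : R) (p : ℕ) : φ (gfp y t p) = gfp (φ ∘ y) (φ t) p := by
  simp [gfp, map_prod]

lemma map_dh (m p : ℕ) (x : Fin m → R) (y : ℤ → R) :
    φ (dh m p x y) = dh m p (φ ∘ x) (φ ∘ y) := by
  simp [dh, map_sum, map_prod]

lemma map_dhZ (m : ℕ) (p : ℤ) (x : Fin m → R) (y : ℤ → R) :
    φ (dhZ m p x y) = dhZ m p (φ ∘ x) (φ ∘ y) := by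
  rw [dhZ, dhZ]
  split_ifs
  · exact map_dh φ m p.toNat x y
  · exact map_zero φ

lemma map_dnum (n : ℕ) (x : Fin n → R) (y : ℤ → R) (l : Fin n → ℕ) :
    φ (dnum n x y l) = dnum n (φ ∘ x) (φ ∘ y) l := by
  rw [dnum, dnum, RingHom.map_det]
  congr 1
  ext i j
  simp [Matrix.map_apply, map_gfp]

lemma map_detH (n : ℕ) (x : Fin n → R) (y : ℤ → R) (l : Fin n → ℕ) :
    φ (Matrix.det (Matrix.of fun i j : Fin n =>
        dhZ n ((l i : ℤ) + ((j:ℕ):ℤ) - ((i:ℕ):ℤ)) x (fun k => y (k - ((j:ℕ):ℤ)))))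
      = Matrix.det (Matrix.of fun i j : Fin n =>
        dhZ n ((l i : ℤ) + ((j:ℕ):ℤ) - ((i:ℕ):ℤ)) (φ ∘ x) (fun k => (φ ∘ y) (k - ((j:ℕ):ℤ)))) := by
  rw [RingHom.map_det]
  congr 1
  ext i j
  simp only [Matrix.map_apply, Matrix.of_apply]
  exact map_dhZ φ n _ x _

end maps

/-- generalized Jacobi–Trudi formula:
`^n s_λ(x_1,…,x_n|y) = det [h_{λ_i+j-i}(x_1,…,x_n | τ^{j-1} y)]_{i,j=1}^n`
(written multiplicatively, with `(τ^m y)_k = y_{k-m}` and zero-based `i, j`). -/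
theorem jacobi_trudi {R : Type*} [CommRing R] (n : ℕ) (x : Fin n → R) (y : ℤ → R)
    (l : Fin n → ℕ) (hl : Antitone l) :
    dnum n x y l =
      Matrix.det (Matrix.of fun i j : Fin n =>
          dhZ n ((l i : ℤ) + (j : ℕ) - (i : ℕ)) x (fun k => y (k - (j : ℕ)))) *
        dden n x y := by

  rcases Nat.eq_zero_or_pos n with rfl | hn
  · simp [dnum, dden, Matrix.det_isEmpty]
  · let xA : Fin n → MvPolynomial (Fin n ⊕ ℤ) ℤ := fun i => MvPolynomial.X (Sum.inl i)
    let yA : ℤ → MvPolynomial (Fin n ⊕ ℤ) ℤ := fun k => MvPolynomial.X (Sum.inr k)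
    let ψ : MvPolynomial (Fin n ⊕ ℤ) ℤ →+* FractionRing (MvPolynomial (Fin n ⊕ ℤ) ℤ) :=
      algebraMap _ _
    have hψ : Function.Injective ψ :=
      IsFractionRing.injective (MvPolynomial (Fin n ⊕ ℤ) ℤ) (FractionRing (MvPolynomial (Fin n ⊕ ℤ) ℤ))
    have hxK : Function.Injective (ψ ∘ xA) := by
      intro a b hab
      exact Sum.inl.inj (MvPolynomial.X_injective (hψ hab))
    have hK := jt_field n hn (ψ ∘ xA) hxK (ψ ∘ yA) l
    have hAeq : dnum n xA yA l =
        Matrix.det (Matrix.of fun i j : Fin n =>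
          dhZ n ((l i : ℤ) + ((j:ℕ):ℤ) - ((i:ℕ):ℤ)) xA (fun k => yA (k - ((j:ℕ):ℤ)))) *
        dden n xA yA := by
      apply hψ
      simp only [dden]
      rw [_root_.map_mul, map_dnum, map_detH, map_dnum]
      simpa [dden] using hK
    let φ : MvPolynomial (Fin n ⊕ ℤ) ℤ →+* R := (MvPolynomial.aeval (Sum.elim x y)).toRingHom
    have := congrArg φ hAeq
    simp only [dden] at this ⊢
    rw [_root_.map_mul, map_dnum, map_detH, map_dnum] at this
    have hx : φ ∘ xA = x := funext fun i => by simp only [φ, xA, AlgHom.toRingHom_eq_coe, RingHom.coe_coe, Function.comp_apply, MvPolynomial.aeval_X, Sum.elim_inl]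
    have hy : φ ∘ yA = y := funext fun k => by simp only [φ, yA, AlgHom.toRingHom_eq_coe, RingHom.coe_coe, Function.comp_apply, MvPolynomial.aeval_X, Sum.elim_inr]
    rw [hx, hy] at this
    exact this
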